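/- The image of X = (ℂ² × (ℂ*)²) ∪ ((ℂ*)² × ℂ²) under the map π(x) = (x₁x₄, x₂x₄, x₃) equals ℂ³ \ (({0} × ℂ* × {0}) ∪ (ℂ* × {0} × {0})). -/
import Mathlib


def Xset : Set (ℂ × ℂ × ℂ × ℂ) :=
  {x | (x.2.2.1 ≠ 0 ∧ x.2.2.2 ≠ 0) ∨ (x.1 ≠ 0 ∧ x.2.1 ≠ 0)}

def piMap (x : ℂ × ℂ × ℂ × ℂ) : ℂ × ℂ × ℂ :=
  (x.1 * x.2.2.2, x.2.1 * x.2.2.2, x.2.2.1)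

/-- π(X) = ℂ³ \ (({0} × ℂ* × {0}) ∪ (ℂ* × {0} × {0})). -/
theorem image_of_X :
    piMap '' Xset =
      {y : ℂ × ℂ × ℂ | y.1 = 0 ∧ y.2.1 ≠ 0 ∧ y.2.2 = 0}ᶜ ∩
      {y : ℂ × ℂ × ℂ | y.1 ≠ 0 ∧ y.2.1 = 0 ∧ y.2.2 = 0}ᶜ := by
  ext ⟨y1, y2, y3⟩
  simp only [Set.mem_image, Set.mem_inter_iff, Set.mem_compl_iff, Set.mem_setOf_eq,
    Xset, piMap, Prod.mk.injEq]
  constructor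
  · rintro ⟨⟨x1, x2, x3, x4⟩, hX, h1, h2, h3⟩
    subst h1 h2 h3
    rcases hX with ⟨h3, h4⟩ | ⟨h1, h2⟩
    · exact ⟨fun h => h3 h.2.2, fun h => h3 h.2.2⟩
    · constructor
      · rintro ⟨ha, hb, -⟩
        exact hb (by rcases mul_eq_zero.mp ha with h | h; exact absurd h h1; exact mul_eq_zero_of_right _ h)
      · rintro ⟨ha, hb, -⟩
        exact ha (by rcases mul_eq_zero.mp hb with h | h; exact absurd h h2; exact mul_eq_zero_of_right _ h)
  · rintro ⟨h1, h2⟩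
    by_cases h3 : y3 = 0
    · by_cases hy1 : y1 = 0
      · have hy2 : y2 = 0 := by
          by_contra hy2; exact h1 ⟨hy1, hy2, h3⟩
        exact ⟨(1, 1, 0, 0), Or.inr ⟨one_ne_zero, one_ne_zero⟩, by simp [hy1, hy2, h3]⟩
      · have hy2 : y2 ≠ 0 := by
          intro hy2; exact h2 ⟨hy1, hy2, h3⟩
        exact ⟨(y1, y2, y3, 1), Or.inr ⟨hy1, hy2⟩, by simp⟩
    · exact ⟨(y1, y2, y3, 1), Or.inl ⟨h3, one_ne_zero⟩, by simp⟩
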